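/- Suppose $\vec{u}:[0,\infty)\times\mathbb{R}^d\to\mathbb{R}^d$ satisfies $\|\vec{u}\|_{L^\infty_\alpha}=\sup_{t>0}t^{\frac{\alpha-1}{\alpha}}\|\vec u(t,\cdot)\|_\infty<\infty$ and the bilinear operator $B(\vec u,\vec v)(t,x)$ satisfies the pointwise bound $|B(\vec u,\vec v)(t,x)|\le C_0\int_0^t\int_{\mathbb{R}^d}\frac{|\vec u(s,y)||\vec v(s,y)|}{(|t-s|^{1/\alpha}+|x-y|)^{d+1}}dy\,ds$. Then $\|B(\vec u,\vec v)\|_{L^\infty_\alpha}\le C\|\vec u\|_{L^\infty_\alpha}\|\vec v\|_{L^\infty_\alpha}$ for some constant $C=C(C_0,d,\alpha)$, provided $1<\alpha<2$. -/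

import Mathlib

open MeasureTheory ENNReal

lemma aux_ker (d : ℕ) {a : ℝ} (ha : 0 < a) (x : Fin d → ℝ) :
    Integrable (fun y : Fin d → ℝ => (a + ‖x - y‖) ^ (-((d:ℝ)+1))) volume ∧
    ∫ y : Fin d → ℝ, (a + ‖x - y‖) ^ (-((d:ℝ)+1)) =
      a⁻¹ * ∫ z : Fin d → ℝ, (1 + ‖z‖) ^ (-((d:ℝ)+1)) := by
  set r : ℝ := (d:ℝ)+1 with hr
  have hfr : (Module.finrank ℝ (Fin d → ℝ) : ℝ) < r := by
    rw [Module.finrank_fin_fun]; simp [hr]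
  have hf : Integrable (fun z : Fin d → ℝ => (1+‖z‖) ^ (-r)) volume :=
    integrable_one_add_norm hfr
  have key : ∀ w : Fin d → ℝ, (a + ‖w‖) ^ (-r) = a ^ (-r) * (1 + ‖a⁻¹ • w‖) ^ (-r) := by
    intro w
    have h1 : ‖a⁻¹ • w‖ = a⁻¹ * ‖w‖ := by
      rw [norm_smul, Real.norm_eq_abs, abs_of_pos (inv_pos.2 ha)]
    have h2 : a + ‖w‖ = a * (1 + a⁻¹ * ‖w‖) := by field_simp
    rw [h1, h2, Real.mul_rpow ha.le (by positivity)]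
  have h2 : Integrable (fun y : Fin d → ℝ => (1 + ‖a⁻¹ • y‖) ^ (-r)) volume :=
    (integrable_comp_smul_iff volume (fun z : Fin d → ℝ => (1+‖z‖) ^ (-r))
      (inv_ne_zero ha.ne')).2 hf
  have h3 : Integrable (fun y : Fin d → ℝ => (1 + ‖a⁻¹ • (x - y)‖) ^ (-r)) volume :=
    h2.comp_sub_left x
  constructor
  · simp only [key]
    exact h3.const_mul _
  · have e1 : ∫ y : Fin d → ℝ, (a + ‖x - y‖) ^ (-r)
        = a ^ (-r) * ∫ y : Fin d → ℝ, (1 + ‖a⁻¹ • (x - y)‖) ^ (-r) := by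
      simp only [key]
      exact integral_const_mul _ _
    have e2 : ∫ y : Fin d → ℝ, (1 + ‖a⁻¹ • (x - y)‖) ^ (-r)
        = ∫ y : Fin d → ℝ, (1 + ‖a⁻¹ • y‖) ^ (-r) :=
      integral_sub_left_eq_self (fun w : Fin d → ℝ => (1 + ‖a⁻¹ • w‖) ^ (-r)) volume x
    have e3 : ∫ y : Fin d → ℝ, (1 + ‖a⁻¹ • y‖) ^ (-r)
        = (a ^ d) • ∫ z : Fin d → ℝ, (1 + ‖z‖) ^ (-r) := by
      rw [Measure.integral_comp_smul_of_nonneg volume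
        (fun z : Fin d → ℝ => (1+‖z‖) ^ (-r)) a⁻¹ (hR := inv_nonneg.2 ha.le)]
      rw [Module.finrank_fin_fun, inv_pow, inv_inv]
    rw [e1, e2, e3, smul_eq_mul, ← mul_assoc]
    congr 1
    have : a ^ (-r) * a ^ (d:ℕ) = a ^ (-r) * a ^ ((d:ℕ):ℝ) := by
      rw [Real.rpow_natCast]
    rw [this, ← Real.rpow_add ha]
    have : -r + (d:ℝ) = -1 := by rw [hr]; ring
    rw [this, Real.rpow_neg_one]

lemma aux_time {t b c : ℝ} (ht : 0 < t) (hb0 : 0 ≤ b) (hb : b < 1) (hc0 : 0 ≤ c) (hc : c < 1) :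
    IntegrableOn (fun s => s ^ (-b) * (t - s) ^ (-c)) (Set.Ioo 0 t) volume ∧
    ∫ s in Set.Ioo (0:ℝ) t, s ^ (-b) * (t - s) ^ (-c)
      ≤ (2/(1-b) + 2/(1-c)) * t ^ (1 - b - c) := by
  have ht2 : 0 < t/2 := by linarith
  have h1 : IntegrableOn (fun s : ℝ => s ^ (-b)) (Set.Ioo 0 t) volume :=
    ((intervalIntegrable_iff_integrableOn_Ioc_of_le ht.le).1
      (intervalIntegral.intervalIntegrable_rpow' (by linarith))).mono_set
      Set.Ioo_subset_Ioc_self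
  have h2 : IntegrableOn (fun s : ℝ => (t - s) ^ (-c)) (Set.Ioo 0 t) volume := by
    have h := ((intervalIntegral.intervalIntegrable_rpow' (a := 0) (b := t)
      (r := -c) (by linarith)).comp_sub_left t).symm
    simp only [sub_zero, sub_self] at h
    exact ((intervalIntegrable_iff_integrableOn_Ioc_of_le ht.le).1 h).mono_set
      Set.Ioo_subset_Ioc_self
  set H : ℝ → ℝ := fun s => (t/2) ^ (-c) * s ^ (-b) + (t/2) ^ (-b) * (t - s) ^ (-c) with hH
  have hHint : IntegrableOn H (Set.Ioo 0 t) volume := (h1.const_mul _).add (h2.const_mul _)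
  have hbound : ∀ s ∈ Set.Ioo (0:ℝ) t, s ^ (-b) * (t - s) ^ (-c) ≤ H s := by
    intro s hs
    obtain ⟨hs0, hst⟩ := hs
    have hts : 0 < t - s := by linarith
    rcases le_or_gt s (t/2) with h | h
    · have key : (t - s) ^ (-c) ≤ (t/2) ^ (-c) :=
        Real.rpow_le_rpow_of_nonpos ht2 (by linarith) (by linarith)
      have h5 : s ^ (-b) * (t - s) ^ (-c) ≤ (t/2) ^ (-c) * s ^ (-b) := by
        rw [mul_comm]
        exact mul_le_mul_of_nonneg_right key (Real.rpow_nonneg hs0.le _)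
      refine h5.trans ?_
      simp only [hH, le_add_iff_nonneg_right]
      have := Real.rpow_nonneg ht2.le (-b)
      have := Real.rpow_nonneg hts.le (-c)
      positivity
    · have key : s ^ (-b) ≤ (t/2) ^ (-b) :=
        Real.rpow_le_rpow_of_nonpos ht2 h.le (by linarith)
      have h5 : s ^ (-b) * (t - s) ^ (-c) ≤ (t/2) ^ (-b) * (t - s) ^ (-c) :=
        mul_le_mul_of_nonneg_right key (Real.rpow_nonneg hts.le _)
      refine h5.trans ?_
      simp only [hH, le_add_iff_nonneg_left]
      have := Real.rpow_nonneg ht2.le (-c)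
      have := Real.rpow_nonneg hs0.le (-b)
      positivity
  have hint : IntegrableOn (fun s : ℝ => s ^ (-b) * (t - s) ^ (-c)) (Set.Ioo 0 t) volume := by
    refine hHint.mono' ?_ ?_
    · exact (by fun_prop : Measurable (fun s : ℝ => s ^ (-b) * (t - s) ^ (-c))).aestronglyMeasurable
    · refine (ae_restrict_iff' measurableSet_Ioo).2 (ae_of_all _ fun s hs => ?_)
      rw [Real.norm_eq_abs, abs_of_nonneg
        (mul_nonneg (Real.rpow_nonneg hs.1.le _) (Real.rpow_nonneg (by linarith [hs.2]) _))]
      exact hbound s hs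
  refine ⟨hint, ?_⟩
  have intpow : ∀ e : ℝ, 0 ≤ e → e < 1 →
      ∫ s in Set.Ioo (0:ℝ) t, s ^ (-e) = t ^ (-e+1) / (-e+1) := by
    intro e he0 he1
    rw [← integral_Ioc_eq_integral_Ioo, ← intervalIntegral.integral_of_le ht.le,
      integral_rpow (Or.inl (by linarith))]
    rw [Real.zero_rpow (by intro h; linarith), sub_zero]
  have int1 : ∫ s in Set.Ioo (0:ℝ) t, s ^ (-b) = t ^ (-b+1) / (-b+1) := intpow b hb0 hb
  have int2 : ∫ s in Set.Ioo (0:ℝ) t, (t - s) ^ (-c) = t ^ (-c+1) / (-c+1) := by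
    rw [← integral_Ioc_eq_integral_Ioo, ← intervalIntegral.integral_of_le ht.le,
      intervalIntegral.integral_comp_sub_left (fun u : ℝ => u ^ (-c)) t]
    norm_num
    rw [intervalIntegral.integral_of_le ht.le, integral_Ioc_eq_integral_Ioo]
    exact intpow c hc0 hc
  have step : ∫ s in Set.Ioo (0:ℝ) t, s ^ (-b) * (t - s) ^ (-c)
      ≤ ∫ s in Set.Ioo (0:ℝ) t, H s :=
    setIntegral_mono_on hint hHint measurableSet_Ioo hbound
  have intH : ∫ s in Set.Ioo (0:ℝ) t, H s
      = (t/2) ^ (-c) * (t ^ (-b+1) / (-b+1)) + (t/2) ^ (-b) * (t ^ (-c+1) / (-c+1)) := by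
    simp only [hH]
    rw [integral_add (h1.const_mul _) (h2.const_mul _), integral_const_mul, integral_const_mul,
      int1, int2]
  have pow2 : ∀ e : ℝ, 0 ≤ e → e < 1 → (t/2) ^ (-e) ≤ 2 * t ^ (-e) := by
    intro e he0 he1
    rw [Real.div_rpow ht.le (by norm_num), Real.rpow_neg (by norm_num : (0:ℝ) ≤ 2),
      div_inv_eq_mul, mul_comm]
    have h2e : (2:ℝ) ^ e ≤ 2 := by
      calc (2:ℝ) ^ e ≤ (2:ℝ) ^ (1:ℝ) :=
        Real.rpow_le_rpow_of_exponent_le (by norm_num) he1.le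
      _ = 2 := Real.rpow_one 2
    exact mul_le_mul_of_nonneg_right h2e (Real.rpow_nonneg ht.le _)
  have tcomb : ∀ e f : ℝ, t ^ (-e) * t ^ (-f+1) = t ^ (1 - e - f) := by
    intro e f
    rw [← Real.rpow_add ht]
    ring_nf
  have final : (t/2) ^ (-c) * (t ^ (-b+1) / (-b+1)) + (t/2) ^ (-b) * (t ^ (-c+1) / (-c+1))
      ≤ (2/(1-b) + 2/(1-c)) * t ^ (1 - b - c) := by
    have e1 : (t/2) ^ (-c) * (t ^ (-b+1) / (-b+1)) ≤ 2/(1-b) * t ^ (1 - b - c) := by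
      have hmb : (0:ℝ) < -b+1 := by linarith
      have := mul_le_mul_of_nonneg_right (pow2 c hc0 hc)
        (div_nonneg (Real.rpow_nonneg ht.le (-b+1)) hmb.le)
      refine this.trans ?_
      rw [show (2:ℝ) * t ^ (-c) * (t ^ (-b+1) / (-b+1)) = 2/(-b+1) * (t ^ (-c) * t ^ (-b+1)) by ring,
        tcomb c b, show (1 - c - b) = (1 - b - c) by ring, show (-b+1) = (1-b) by ring]
    have e2 : (t/2) ^ (-b) * (t ^ (-c+1) / (-c+1)) ≤ 2/(1-c) * t ^ (1 - b - c) := by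
      have hmc : (0:ℝ) < -c+1 := by linarith
      have := mul_le_mul_of_nonneg_right (pow2 b hb0 hb)
        (div_nonneg (Real.rpow_nonneg ht.le (-c+1)) hmc.le)
      refine this.trans ?_
      rw [show (2:ℝ) * t ^ (-b) * (t ^ (-c+1) / (-c+1)) = 2/(-c+1) * (t ^ (-b) * t ^ (-c+1)) by ring,
        tcomb b c, show (-c+1) = (1-c) by ring]
    calc _ ≤ 2/(1-b) * t ^ (1 - b - c) + 2/(1-c) * t ^ (1 - b - c) := add_le_add e1 e2
      _ = (2/(1-b) + 2/(1-c)) * t ^ (1 - b - c) := by ring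
  calc _ ≤ _ := step
    _ = _ := intH
    _ ≤ _ := final

/-- Boundedness of the Duhamel bilinear term in the critical weighted space
`L^∞_α`, assuming the Oseen-type pointwise kernel bound for
`𝔭_{t-s} ∗ ℙ div`. -/
theorem stmt_11 (d : ℕ) (α : ℝ) (hα : 1 < α ∧ α < 2) (C0 : ℝ) (hC0 : 0 < C0) :
    ∃ C > (0:ℝ), ∀ u v B : ℝ → (Fin d → ℝ) → (Fin d → ℝ),
      (⨆ t > (0:ℝ), ENNReal.ofReal (t ^ ((α - 1)/α)) *
          ⨆ x : Fin d → ℝ, (‖u t x‖₊ : ℝ≥0∞)) < ⊤ →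
      (∀ t > (0:ℝ), ∀ x : Fin d → ℝ,
        ‖B t x‖ ≤ C0 * ∫ s in Set.Ioo (0:ℝ) t, ∫ y : Fin d → ℝ,
          ‖u s y‖ * ‖v s y‖ / (((t - s) ^ (1/α) + ‖x - y‖) ^ ((d : ℝ) + 1))) →
      (⨆ t > (0:ℝ), ENNReal.ofReal (t ^ ((α - 1)/α)) *
          ⨆ x : Fin d → ℝ, (‖B t x‖₊ : ℝ≥0∞))
        ≤ ENNReal.ofReal C *
            (⨆ t > (0:ℝ), ENNReal.ofReal (t ^ ((α - 1)/α)) *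
              ⨆ x : Fin d → ℝ, (‖u t x‖₊ : ℝ≥0∞)) *
            (⨆ t > (0:ℝ), ENNReal.ofReal (t ^ ((α - 1)/α)) *
              ⨆ x : Fin d → ℝ, (‖v t x‖₊ : ℝ≥0∞)) := by
  obtain ⟨hα1, hα2⟩ := hα
  have hα0 : (0:ℝ) < α := by linarith
  set p : ℝ := (α - 1)/α with hp
  have hp0 : 0 < p := div_pos (by linarith) hα0
  set b : ℝ := 2 * p with hbdef
  set c : ℝ := 1/α with hcdef
  have hb0 : 0 ≤ b := by rw [hbdef]; linarith
  have hb1 : b < 1 := by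
    have hbe : b = (2*α-2)/α := by rw [hbdef, hp]; ring
    rw [hbe, div_lt_one hα0]; linarith
  have hc0 : 0 ≤ c := by rw [hcdef]; positivity
  have hc1 : c < 1 := by rw [hcdef, div_lt_one hα0]; exact hα1
  have hsum : 1 - b - c = -p := by rw [hbdef, hcdef, hp]; field_simp; ring
  set cd : ℝ := ∫ z : Fin d → ℝ, (1 + ‖z‖) ^ (-((d:ℝ)+1)) with hcd
  have hcd0 : 0 ≤ cd := by
    rw [hcd]; exact integral_nonneg fun z => Real.rpow_nonneg (by positivity) _
  set K : ℝ := 2/(1-b) + 2/(1-c) with hK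
  have hK0 : 0 < K := by
    rw [hK]
    have := div_pos (by norm_num : (0:ℝ) < 2) (by linarith : (0:ℝ) < 1 - b)
    have := div_pos (by norm_num : (0:ℝ) < 2) (by linarith : (0:ℝ) < 1 - c)
    linarith
  have hCpos : 0 < C0 * (cd + 1) * K := mul_pos (mul_pos hC0 (by linarith)) hK0
  refine ⟨C0 * (cd + 1) * K, hCpos, ?_⟩
  intro u v B hu hB
  set Nu := ⨆ t > (0:ℝ), ENNReal.ofReal (t ^ p) * ⨆ x : Fin d → ℝ, (‖u t x‖₊ : ℝ≥0∞) with hNu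
  set Nv := ⨆ t > (0:ℝ), ENNReal.ofReal (t ^ p) * ⨆ x : Fin d → ℝ, (‖v t x‖₊ : ℝ≥0∞) with hNv
  have usup : ∀ (w : ℝ → (Fin d → ℝ) → (Fin d → ℝ)) (s : ℝ), 0 < s → ∀ y : Fin d → ℝ,
      ENNReal.ofReal (s ^ p) * (‖w s y‖₊ : ℝ≥0∞)
        ≤ ⨆ t > (0:ℝ), ENNReal.ofReal (t ^ p) * ⨆ x : Fin d → ℝ, (‖w t x‖₊ : ℝ≥0∞) := by
    intro w s hs y
    refine le_trans ?_ (le_iSup₂ (f := fun t (_ : t > (0:ℝ)) =>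
      ENNReal.ofReal (t ^ p) * ⨆ x : Fin d → ℝ, (‖w t x‖₊ : ℝ≥0∞)) s hs)
    gcongr
    exact le_iSup (fun x : Fin d → ℝ => ((‖w s x‖₊ : ℝ≥0∞))) y
  by_cases hNu0 : Nu = 0
  · -- u vanishes on positive times
    have hu0 : ∀ s : ℝ, 0 < s → ∀ y : Fin d → ℝ, ‖u s y‖ = 0 := by
      intro s hs y
      have h := usup u s hs y
      rw [← hNu, hNu0, le_zero_iff, mul_eq_zero] at h
      rcases h with h | h
      · exact absurd h (by simp [ENNReal.ofReal_eq_zero, not_le,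
          Real.rpow_pos_of_pos hs p])
      · simpa using h
    refine iSup₂_le fun t ht => ?_
    have hBz : ∀ x : Fin d → ℝ, (‖B t x‖₊ : ℝ≥0∞) = 0 := by
      intro x
      have hb' := hB t ht x
      have hin : Set.EqOn (fun s : ℝ => ∫ y : Fin d → ℝ,
          ‖u s y‖ * ‖v s y‖ / ((t - s) ^ c + ‖x - y‖) ^ ((d:ℝ)+1)) (fun _ => (0:ℝ))
          (Set.Ioo 0 t) := by
        intro s hs
        have hz : (fun y : Fin d → ℝ =>
            ‖u s y‖ * ‖v s y‖ / ((t - s) ^ c + ‖x - y‖) ^ ((d:ℝ)+1)) = fun _ => (0:ℝ) :=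
          funext fun y => by rw [hu0 s hs.1 y]; simp
        simpa using congrArg (fun f : (Fin d → ℝ) → ℝ => ∫ y : Fin d → ℝ, f y) hz
      rw [setIntegral_congr_fun measurableSet_Ioo hin, integral_zero, mul_zero] at hb'
      have hz2 : B t x = 0 := norm_le_zero_iff.1 hb'
      simp [hz2]
    simp only [hBz, iSup_const, mul_zero]
    exact zero_le
  by_cases hNvT : Nv = ⊤
  · rw [hNvT, ENNReal.mul_top (mul_ne_zero (ENNReal.ofReal_pos.2 hCpos).ne' hNu0)]
    exact le_top
  -- main case
  have hNuT : Nu ≠ ⊤ := hu.ne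
  set Mu := Nu.toReal with hMu
  set Mv := Nv.toReal with hMvdef
  have hMu0 : 0 ≤ Mu := ENNReal.toReal_nonneg
  have hMv0 : 0 ≤ Mv := ENNReal.toReal_nonneg
  have hbd : ∀ (w : ℝ → (Fin d → ℝ) → (Fin d → ℝ)) (N : ℝ≥0∞), N ≠ ⊤ →
      (⨆ t > (0:ℝ), ENNReal.ofReal (t ^ p) * ⨆ x : Fin d → ℝ, (‖w t x‖₊ : ℝ≥0∞)) = N →
      ∀ s : ℝ, 0 < s → ∀ y : Fin d → ℝ, ‖w s y‖ ≤ N.toReal * s ^ (-p) := by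
    intro w N hNT hNeq s hs y
    have h := (usup w s hs y).trans_eq hNeq
    have h2 := ENNReal.toReal_mono hNT h
    rw [ENNReal.toReal_mul, ENNReal.toReal_ofReal (Real.rpow_nonneg hs.le p)] at h2
    simp only [ENNReal.coe_toReal, coe_nnnorm] at h2
    have hsp : (0:ℝ) < s ^ p := Real.rpow_pos_of_pos hs p
    have he : N.toReal * s ^ (-p) = N.toReal / s ^ p := by
      rw [Real.rpow_neg hs.le]; ring
    rw [he, le_div_iff₀ hsp, mul_comm]
    exact h2
  have hubd := hbd u Nu hNuT hNu.symm
  have hvbd := hbd v Nv hNvT hNv.symm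
  -- key pointwise estimate
  have key : ∀ t : ℝ, 0 < t → ∀ x : Fin d → ℝ,
      ‖B t x‖ ≤ (C0 * (cd + 1) * K) * Mu * Mv * t ^ (-p) := by
    intro t ht x
    have hBle := hB t ht x
    have inner : ∀ s ∈ Set.Ioo (0:ℝ) t,
        (∫ y : Fin d → ℝ, ‖u s y‖ * ‖v s y‖ / ((t - s) ^ c + ‖x - y‖) ^ ((d:ℝ)+1))
          ≤ (Mu * Mv * cd) * (s ^ (-b) * (t - s) ^ (-c)) := by
      intro s hs
      obtain ⟨hs0, hst⟩ := hs
      have hts : 0 < t - s := by linarith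
      have ha : 0 < (t - s) ^ c := Real.rpow_pos_of_pos hts c
      obtain ⟨kint, kval⟩ := aux_ker d ha x
      have hmaj : ∀ y : Fin d → ℝ,
          ‖u s y‖ * ‖v s y‖ / ((t - s) ^ c + ‖x - y‖) ^ ((d:ℝ)+1)
            ≤ (Mu * s ^ (-p) * (Mv * s ^ (-p))) * ((t - s) ^ c + ‖x - y‖) ^ (-((d:ℝ)+1)) := by
        intro y
        have hA : 0 < (t - s) ^ c + ‖x - y‖ := by positivity
        rw [div_eq_mul_inv, Real.rpow_neg hA.le]
        refine mul_le_mul_of_nonneg_right ?_ (inv_nonneg.2 (Real.rpow_nonneg hA.le _))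
        exact mul_le_mul (hubd s hs0 y) (hvbd s hs0 y) (norm_nonneg _)
          (by positivity)
      calc (∫ y : Fin d → ℝ, ‖u s y‖ * ‖v s y‖ / ((t - s) ^ c + ‖x - y‖) ^ ((d:ℝ)+1))
          ≤ ∫ y : Fin d → ℝ,
            (Mu * s ^ (-p) * (Mv * s ^ (-p))) * ((t - s) ^ c + ‖x - y‖) ^ (-((d:ℝ)+1)) := by
            refine integral_mono_of_nonneg (ae_of_all _ fun y => ?_)
              (kint.const_mul _) (ae_of_all _ hmaj)
            have hA : 0 < (t - s) ^ c + ‖x - y‖ := by positivity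
            exact div_nonneg (mul_nonneg (norm_nonneg _) (norm_nonneg _))
              (Real.rpow_nonneg hA.le _)
        _ = (Mu * s ^ (-p) * (Mv * s ^ (-p))) * (((t - s) ^ c)⁻¹ * cd) := by
            rw [integral_const_mul, kval, ← hcd]
        _ = (Mu * Mv * cd) * (s ^ (-b) * (t - s) ^ (-c)) := by
            have h1 : ((t - s) ^ c)⁻¹ = (t - s) ^ (-c) := (Real.rpow_neg hts.le c).symm
            have h2 : s ^ (-p) * s ^ (-p) = s ^ (-b) := by
              rw [← Real.rpow_add hs0]; congr 1; rw [hbdef]; ring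
            rw [h1, ← h2]; ring
    obtain ⟨tint, tval⟩ := aux_time ht hb0 hb1 hc0 hc1
    have outer : (∫ s in Set.Ioo (0:ℝ) t, ∫ y : Fin d → ℝ,
        ‖u s y‖ * ‖v s y‖ / ((t - s) ^ c + ‖x - y‖) ^ ((d:ℝ)+1))
          ≤ (Mu * Mv * cd) * ∫ s in Set.Ioo (0:ℝ) t, s ^ (-b) * (t - s) ^ (-c) := by
      rw [← integral_const_mul]
      refine integral_mono_of_nonneg ?_ (tint.const_mul _)
        ((ae_restrict_iff' measurableSet_Ioo).2 (ae_of_all _ inner))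
      refine (ae_restrict_iff' measurableSet_Ioo).2 (ae_of_all _ fun s hs => ?_)
      have hts : 0 < t - s := by linarith [hs.2]
      refine integral_nonneg fun y => ?_
      have hA : 0 < (t - s) ^ c + ‖x - y‖ := by
        have := Real.rpow_pos_of_pos hts c
        positivity
      exact div_nonneg (mul_nonneg (norm_nonneg _) (norm_nonneg _))
        (Real.rpow_nonneg hA.le _)
    have step2 : (Mu * Mv * cd) * (∫ s in Set.Ioo (0:ℝ) t, s ^ (-b) * (t - s) ^ (-c))
        ≤ (Mu * Mv * cd) * (K * t ^ (1 - b - c)) := by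
      refine mul_le_mul_of_nonneg_left ?_ (by positivity)
      rw [hK]
      exact tval
    have step3 : (Mu * Mv * cd) * (K * t ^ (1 - b - c))
        = (cd * K) * (Mu * Mv * t ^ (-p)) := by rw [hsum]; ring
    calc ‖B t x‖ ≤ C0 * ∫ s in Set.Ioo (0:ℝ) t, ∫ y : Fin d → ℝ,
          ‖u s y‖ * ‖v s y‖ / ((t - s) ^ c + ‖x - y‖) ^ ((d:ℝ)+1) := hBle
      _ ≤ C0 * ((cd * K) * (Mu * Mv * t ^ (-p))) := by
          refine mul_le_mul_of_nonneg_left ?_ hC0.le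
          rw [← step3]
          exact (outer.trans step2)
      _ ≤ (C0 * (cd + 1) * K) * Mu * Mv * t ^ (-p) := by
          have hnn : 0 ≤ K * (Mu * Mv * t ^ (-p)) :=
            mul_nonneg hK0.le (mul_nonneg (mul_nonneg hMu0 hMv0)
              (Real.rpow_nonneg ht.le _))
          have hcdle : C0 * cd ≤ C0 * (cd + 1) := by nlinarith
          calc C0 * ((cd * K) * (Mu * Mv * t ^ (-p)))
              = (C0 * cd) * (K * (Mu * Mv * t ^ (-p))) := by ring
            _ ≤ (C0 * (cd + 1)) * (K * (Mu * Mv * t ^ (-p))) :=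
                mul_le_mul_of_nonneg_right hcdle hnn
            _ = (C0 * (cd + 1) * K) * Mu * Mv * t ^ (-p) := by ring
  -- conclude
  rw [← ENNReal.ofReal_toReal hNuT, ← ENNReal.ofReal_toReal hNvT, ← hMu, ← hMvdef,
    ← ENNReal.ofReal_mul hCpos.le, ← ENNReal.ofReal_mul (by positivity)]
  refine iSup₂_le fun t ht => ?_
  rw [ENNReal.mul_iSup]
  refine iSup_le fun x => ?_
  rw [← ENNReal.ofReal_coe_nnreal, coe_nnnorm, ← ENNReal.ofReal_mul (Real.rpow_nonneg ht.le p)]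
  refine ENNReal.ofReal_le_ofReal ?_
  have hk := key t ht x
  have htp : (0:ℝ) < t ^ p := Real.rpow_pos_of_pos ht p
  calc t ^ p * ‖B t x‖ ≤ t ^ p * ((C0 * (cd + 1) * K) * Mu * Mv * t ^ (-p)) :=
        mul_le_mul_of_nonneg_left hk htp.le
    _ = (C0 * (cd + 1) * K) * Mu * Mv * (t ^ p * t ^ (-p)) := by ring
    _ = C0 * (cd + 1) * K * Mu * Mv := by
        rw [← Real.rpow_add ht, add_neg_cancel, Real.rpow_zero, mul_one]
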